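/- For q ∈ [0,1] and any symmetric measurable W : [0,1]² → [0,1]: t(K₃, (2q − W)₊) ≥ 2q³ − t(K₃, W), where (y)₊ = max(y,0) and t(K₃, U) = ∫∫∫ U(x,y)U(x,z)U(y,z) dx dy dz. -/

import Mathlib

open MeasureTheory Real

noncomputable section

def I01 : Set ℝ := Set.Icc 0 1

/-- Triangle density of a kernel `W`. -/
def tK3 (W : ℝ → ℝ → ℝ) : ℝ :=
  ∫ x in I01, ∫ y in I01, ∫ z in I01, W x y * W x z * W y z

instance : IsProbabilityMeasure ((volume : Measure ℝ).restrict I01) :=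
  ⟨by simp [I01, Real.volume_Icc]⟩

lemma integ0 {f : ℝ → ℝ} (hf : Measurable f) {C : ℝ} (h : ∀ x, |f x| ≤ C) :
    Integrable f (volume.restrict I01) :=
  (integrable_const C).mono' hf.aestronglyMeasurable (Filter.Eventually.of_forall h)

lemma integ2 {f : ℝ × ℝ → ℝ} (hf : Measurable f) {C : ℝ} (h : ∀ p, |f p| ≤ C) :
    Integrable f ((volume.restrict I01).prod (volume.restrict I01)) :=
  (integrable_const C).mono' hf.aestronglyMeasurable (Filter.Eventually.of_forall h)

def gI (V : ℝ → ℝ → ℝ) : ℝ → ℝ := fun x => ∫ y in I01, V x y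
def hI (V : ℝ → ℝ → ℝ) : ℝ → ℝ → ℝ := fun x y => ∫ z in I01, V x z * V y z

lemma pair_int (q : ℝ) (V : ℝ → ℝ → ℝ) (hm : Measurable (Function.uncurry V))
    (hbd : ∀ x y, |V x y| ≤ 2 * q) (x y : ℝ) :
    (∫ z in I01, (2*q - V x z) * (2*q - V y z))
      = 4*q^2 - 2*q * gI V x - 2*q * gI V y + hI V x y := by
  have hVx : Measurable (V x) := hm.of_uncurry_left
  have hVy : Measurable (V y) := hm.of_uncurry_left
  have iVx : Integrable (V x) (volume.restrict I01) := integ0 hVx (hbd x)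
  have iVy : Integrable (V y) (volume.restrict I01) := integ0 hVy (hbd y)
  have iVV : Integrable (fun z => V x z * V y z) (volume.restrict I01) := by
    refine integ0 (hVx.mul hVy) (C := (2*q)*(2*q)) fun z => ?_
    rw [abs_mul]
    exact mul_le_mul (hbd x z) (hbd y z) (abs_nonneg _) (le_trans (abs_nonneg _) (hbd 0 0))
  have e : (fun z => (2*q - V x z) * (2*q - V y z))
      = fun z => (2*q*(2*q) - 2*q * V y z) - (2*q * V x z - V x z * V y z) := by
    funext z; ring
  have i1 : Integrable (fun z => 2*q*(2*q) - 2*q * V y z) (volume.restrict I01) := by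
    exact (integrable_const _).sub (iVy.const_mul _)
  have i2 : Integrable (fun z => 2*q * V x z - V x z * V y z) (volume.restrict I01) := by
    exact (iVx.const_mul _).sub iVV
  have i3 : Integrable (fun z => (2:ℝ)*q * V y z) (volume.restrict I01) := by
    exact iVy.const_mul _
  have i4 : Integrable (fun z => (2:ℝ)*q * V x z) (volume.restrict I01) := by
    exact iVx.const_mul _
  have m1 : (∫ z in I01, 2*q * V y z) = 2*q * ∫ z in I01, V y z := integral_const_mul _ _
  have m2 : (∫ z in I01, 2*q * V x z) = 2*q * ∫ z in I01, V x z := integral_const_mul _ _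
  rw [e, integral_sub i1 i2, integral_sub (integrable_const _) i3,
      integral_sub i4 iVV, m1, m2, integral_const]
  simp only [measure_univ, ENNReal.toReal_one, probReal_univ, smul_eq_mul, one_mul]
  show _ = 4*q^2 - 2*q * (∫ y in I01, V x y) - 2*q * (∫ z in I01, V y z) + ∫ z in I01, V x z * V y z
  ring

def DI (V : ℝ → ℝ → ℝ) : ℝ := ∫ x in I01, gI V x
def EI (V : ℝ → ℝ → ℝ) : ℝ := ∫ x in I01, (gI V x)^2
def HxI (V : ℝ → ℝ → ℝ) (x : ℝ) : ℝ := ∫ y in I01, hI V x y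
def MxI (V : ℝ → ℝ → ℝ) (x : ℝ) : ℝ := ∫ y in I01, V x y * gI V y
def KxI (V : ℝ → ℝ → ℝ) (x : ℝ) : ℝ := ∫ y in I01, V x y * hI V x y

lemma gI_meas {V : ℝ → ℝ → ℝ} (hm : Measurable (Function.uncurry V)) : Measurable (gI V) :=
  (hm.stronglyMeasurable.integral_prod_right'
    (ν := (volume : Measure ℝ).restrict I01)).measurable

lemma gI_bd {q : ℝ} {V : ℝ → ℝ → ℝ} (hbd : ∀ x y, |V x y| ≤ 2 * q) :
    ∀ x, |gI V x| ≤ 2 * q := by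
  intro x
  have := norm_integral_le_of_norm_le_const (μ := volume.restrict I01)
    (f := fun y => V x y) (C := 2*q) (Filter.Eventually.of_forall (hbd x))
  simpa [measure_univ, gI] using this

lemma intbd {f : ℝ → ℝ} {C : ℝ} (h : ∀ x, |f x| ≤ C) : |∫ x in I01, f x| ≤ C := by
  have := norm_integral_le_of_norm_le_const (μ := volume.restrict I01) (f := f) (C := C)
    (Filter.Eventually.of_forall h)
  simpa [measure_univ] using this

lemma hI_meas {V : ℝ → ℝ → ℝ} (hm : Measurable (Function.uncurry V)) :
    Measurable (Function.uncurry (hI V)) := by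
  have hF : StronglyMeasurable (fun p : (ℝ × ℝ) × ℝ => V p.1.1 p.2 * V p.1.2 p.2) :=
    ((hm.comp ((measurable_fst.fst).prodMk measurable_snd)).mul
      (hm.comp ((measurable_fst.snd).prodMk measurable_snd))).stronglyMeasurable
  exact (hF.integral_prod_right' (ν := (volume : Measure ℝ).restrict I01)).measurable

lemma hI_bd {q : ℝ} {V : ℝ → ℝ → ℝ} (hbd : ∀ x y, |V x y| ≤ 2 * q) :
    ∀ x y, |hI V x y| ≤ (2*q) * (2*q) := by
  have h2q : 0 ≤ 2 * q := le_trans (abs_nonneg _) (hbd 0 0)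
  intro x y
  refine intbd fun z => ?_
  rw [abs_mul]
  exact mul_le_mul (hbd x z) (hbd y z) (abs_nonneg _) h2q

lemma Hx_eq_Mx {q : ℝ} {V : ℝ → ℝ → ℝ} (hm : Measurable (Function.uncurry V))
    (hsymm : ∀ x y, V x y = V y x) (hbd : ∀ x y, |V x y| ≤ 2 * q) (x : ℝ) :
    HxI V x = MxI V x := by
  have h2q : (0:ℝ) ≤ 2 * q := le_trans (abs_nonneg _) (hbd 0 0)
  have hint : Integrable (Function.uncurry (fun y z => V x z * V y z))
      ((volume.restrict I01).prod (volume.restrict I01)) := by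
    refine integ2 ?_ (C := (2*q)*(2*q)) fun p => ?_
    · exact (hm.of_uncurry_left.comp measurable_snd).mul hm
    · rw [Function.uncurry, abs_mul]
      exact mul_le_mul (hbd _ _) (hbd _ _) (abs_nonneg _) h2q
  have swap := integral_integral_swap hint
  have : HxI V x = ∫ z in I01, ∫ y in I01, V x z * V y z := swap
  rw [this, MxI]
  refine integral_congr_ae (Filter.Eventually.of_forall fun z => ?_)
  dsimp only
  rw [integral_const_mul]
  congr 1
  exact integral_congr_ae (Filter.Eventually.of_forall fun y => hsymm y z)

lemma intMx_eq {q : ℝ} {V : ℝ → ℝ → ℝ} (hm : Measurable (Function.uncurry V))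
    (hsymm : ∀ x y, V x y = V y x) (hbd : ∀ x y, |V x y| ≤ 2 * q) :
    (∫ x in I01, MxI V x) = EI V := by
  have h2q : (0:ℝ) ≤ 2 * q := le_trans (abs_nonneg _) (hbd 0 0)
  have hint : Integrable (Function.uncurry (fun x y => V x y * gI V y))
      ((volume.restrict I01).prod (volume.restrict I01)) := by
    refine integ2 ?_ (C := (2*q)*(2*q)) fun p => ?_
    · exact hm.mul ((gI_meas hm).comp measurable_snd)
    · rw [Function.uncurry, abs_mul]
      exact mul_le_mul (hbd _ _) (gI_bd hbd _) (abs_nonneg _) h2q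
  have swap := integral_integral_swap hint
  have : (∫ x in I01, MxI V x) = ∫ y in I01, ∫ x in I01, V x y * gI V y := swap
  rw [this, EI]
  refine integral_congr_ae (Filter.Eventually.of_forall fun y => ?_)
  dsimp only
  rw [integral_mul_const]
  have e2 : (∫ x in I01, V x y) = gI V y :=
    integral_congr_ae (Filter.Eventually.of_forall fun x => hsymm x y)
  rw [e2]; ring

lemma intKx_eq {V : ℝ → ℝ → ℝ} :
    (∫ x in I01, KxI V x) = tK3 V := by
  rw [tK3]
  refine integral_congr_ae (Filter.Eventually.of_forall fun x => ?_)
  rw [KxI]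
  refine integral_congr_ae (Filter.Eventually.of_forall fun y => ?_)
  dsimp only
  have e : (fun z => V x y * V x z * V y z) = fun z => V x y * (V x z * V y z) := by
    funext z; ring
  rw [e, integral_const_mul]
  rfl

lemma row_int (q : ℝ) (V : ℝ → ℝ → ℝ) (hm : Measurable (Function.uncurry V))
    (hbd : ∀ x y, |V x y| ≤ 2 * q) (x : ℝ) :
    (∫ y in I01, (2*q - V x y) * (4*q^2 - 2*q * gI V x - 2*q * gI V y + hI V x y))
      = 2*q*(4*q^2 - 2*q * gI V x) - 4*q^2 * DI V + 2*q * HxI V x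
        - (4*q^2 - 2*q * gI V x) * gI V x + 2*q * MxI V x - KxI V x := by
  have h2q : (0:ℝ) ≤ 2 * q := le_trans (abs_nonneg _) (hbd 0 0)
  have hVx : Measurable (V x) := hm.of_uncurry_left
  have iV : Integrable (V x) (volume.restrict I01) := integ0 hVx (hbd x)
  have ig : Integrable (gI V) (volume.restrict I01) := integ0 (gI_meas hm) (gI_bd hbd)
  have ihx : Integrable (hI V x) (volume.restrict I01) :=
    integ0 (hI_meas hm).of_uncurry_left (hI_bd hbd x)
  have iVg : Integrable (fun y => V x y * gI V y) (volume.restrict I01) := by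
    refine integ0 (hVx.mul (gI_meas hm)) (C := (2*q)*(2*q)) fun y => ?_
    rw [abs_mul]; exact mul_le_mul (hbd x y) (gI_bd hbd y) (abs_nonneg _) h2q
  have iVh : Integrable (fun y => V x y * hI V x y) (volume.restrict I01) := by
    refine integ0 (hVx.mul (hI_meas hm).of_uncurry_left) (C := (2*q)*((2*q)*(2*q))) fun y => ?_
    rw [abs_mul]; exact mul_le_mul (hbd x y) (hI_bd hbd x y) (abs_nonneg _) h2q
  have if1 : Integrable (fun y => 4*q^2 * gI V y) (volume.restrict I01) := ig.const_mul _
  have if2 : Integrable (fun y => 2*q * hI V x y) (volume.restrict I01) := ihx.const_mul _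
  have if3 : Integrable (fun y => (4*q^2 - 2*q * gI V x) * V x y) (volume.restrict I01) :=
    iV.const_mul _
  have if4 : Integrable (fun y => 2*q * (V x y * gI V y)) (volume.restrict I01) :=
    iVg.const_mul _
  have e : (fun y => (2*q - V x y) * (4*q^2 - 2*q * gI V x - 2*q * gI V y + hI V x y))
      = fun y => ((2*q*(4*q^2 - 2*q * gI V x) - 4*q^2 * gI V y) + 2*q * hI V x y)
        - (((4*q^2 - 2*q * gI V x) * V x y - 2*q * (V x y * gI V y)) + V x y * hI V x y) := by
    funext y; ring
  have iA1 : Integrable (fun y => 2*q*(4*q^2 - 2*q * gI V x) - 4*q^2 * gI V y)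
      (volume.restrict I01) := by exact (integrable_const _).sub if1
  have iA : Integrable (fun y => (2*q*(4*q^2 - 2*q * gI V x) - 4*q^2 * gI V y) + 2*q * hI V x y)
      (volume.restrict I01) := by exact iA1.add if2
  have iB1 : Integrable (fun y => (4*q^2 - 2*q * gI V x) * V x y - 2*q * (V x y * gI V y))
      (volume.restrict I01) := by exact if3.sub if4
  have iB : Integrable (fun y => ((4*q^2 - 2*q * gI V x) * V x y - 2*q * (V x y * gI V y))
      + V x y * hI V x y) (volume.restrict I01) := by exact iB1.add iVh
  have m1 : (∫ y in I01, 4*q^2 * gI V y) = 4*q^2 * DI V := integral_const_mul _ _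
  have m2 : (∫ y in I01, 2*q * hI V x y) = 2*q * HxI V x := integral_const_mul _ _
  have m3 : (∫ y in I01, (4*q^2 - 2*q * gI V x) * V x y)
      = (4*q^2 - 2*q * gI V x) * gI V x := integral_const_mul _ _
  have m4 : (∫ y in I01, 2*q * (V x y * gI V y)) = 2*q * MxI V x := integral_const_mul _ _
  rw [e, integral_sub iA iB, integral_add iA1 if2, integral_sub (integrable_const _) if1,
      integral_add iB1 iVh, integral_sub if3 if4, m1, m2, m3, m4, integral_const]
  simp only [measure_univ, ENNReal.toReal_one, probReal_univ, smul_eq_mul, one_mul]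
  show _ = _ - _ + _ - _ + _ - (∫ y in I01, V x y * hI V x y)
  ring

lemma MxI_meas {V : ℝ → ℝ → ℝ} (hm : Measurable (Function.uncurry V)) :
    Measurable (MxI V) := by
  have : Measurable (fun p : ℝ × ℝ => V p.1 p.2 * gI V p.2) :=
    hm.mul ((gI_meas hm).comp measurable_snd)
  exact (this.stronglyMeasurable.integral_prod_right'
    (ν := (volume : Measure ℝ).restrict I01)).measurable

lemma KxI_meas {V : ℝ → ℝ → ℝ} (hm : Measurable (Function.uncurry V)) :
    Measurable (KxI V) := by
  have : Measurable (fun p : ℝ × ℝ => V p.1 p.2 * hI V p.1 p.2) :=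
    hm.mul (hI_meas hm)
  exact (this.stronglyMeasurable.integral_prod_right'
    (ν := (volume : Measure ℝ).restrict I01)).measurable

lemma expand_lemma (q : ℝ) (V : ℝ → ℝ → ℝ) (hm : Measurable (Function.uncurry V))
    (hsymm : ∀ x y, V x y = V y x) (hbd : ∀ x y, |V x y| ≤ 2 * q) :
    tK3 (fun x y => 2*q - V x y) = 8*q^3 - 12*q^2 * DI V + 6*q * EI V - tK3 V := by
  have h2q : (0:ℝ) ≤ 2 * q := le_trans (abs_nonneg _) (hbd 0 0)
  have mid : ∀ x, (∫ y in I01, ∫ z in I01, (2*q - V x y) * (2*q - V x z) * (2*q - V y z))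
      = 2*q*(4*q^2 - 2*q * gI V x) - 4*q^2 * DI V + 2*q * HxI V x
        - (4*q^2 - 2*q * gI V x) * gI V x + 2*q * MxI V x - KxI V x := by
    intro x
    have inner : ∀ y, (∫ z in I01, (2*q - V x y) * (2*q - V x z) * (2*q - V y z))
        = (2*q - V x y) * (4*q^2 - 2*q * gI V x - 2*q * gI V y + hI V x y) := by
      intro y
      have e : (fun z => (2*q - V x y) * (2*q - V x z) * (2*q - V y z))
          = fun z => (2*q - V x y) * ((2*q - V x z) * (2*q - V y z)) := by funext z; ring
      rw [e, integral_const_mul, pair_int q V hm hbd x y]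
    rw [integral_congr_ae (Filter.Eventually.of_forall inner), row_int q V hm hbd x]
  have step1 : tK3 (fun x y => 2*q - V x y)
      = ∫ x in I01, (2*q*(4*q^2 - 2*q * gI V x) - 4*q^2 * DI V + 2*q * HxI V x
        - (4*q^2 - 2*q * gI V x) * gI V x + 2*q * MxI V x - KxI V x) := by
    rw [tK3]
    exact integral_congr_ae (Filter.Eventually.of_forall mid)
  rw [step1]
  have e2 : (fun x => 2*q*(4*q^2 - 2*q * gI V x) - 4*q^2 * DI V + 2*q * HxI V x
        - (4*q^2 - 2*q * gI V x) * gI V x + 2*q * MxI V x - KxI V x)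
      = fun x => ((8*q^3 - 4*q^2 * DI V) - (8*q^2 * gI V x - 2*q * (gI V x)^2))
        + (4*q * MxI V x - KxI V x) := by
    funext x
    rw [Hx_eq_Mx hm hsymm hbd x]
    ring
  have ig : Integrable (gI V) (volume.restrict I01) := integ0 (gI_meas hm) (gI_bd hbd)
  have ig2 : Integrable (fun x => (gI V x)^2) (volume.restrict I01) := by
    refine integ0 ((gI_meas hm).pow_const 2) (C := (2*q)*(2*q)) fun x => ?_
    rw [sq, abs_mul]
    exact mul_le_mul (gI_bd hbd x) (gI_bd hbd x) (abs_nonneg _) h2q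
  have iM : Integrable (MxI V) (volume.restrict I01) := by
    refine integ0 (MxI_meas hm) (C := (2*q)*(2*q)) fun x => ?_
    refine intbd fun y => ?_
    rw [abs_mul]
    exact mul_le_mul (hbd x y) (gI_bd hbd y) (abs_nonneg _) h2q
  have iK : Integrable (KxI V) (volume.restrict I01) := by
    refine integ0 (KxI_meas hm) (C := (2*q)*((2*q)*(2*q))) fun x => ?_
    refine intbd fun y => ?_
    rw [abs_mul]
    exact mul_le_mul (hbd x y) (hI_bd hbd x y) (abs_nonneg _) h2q
  have if1 : Integrable (fun x => 8*q^2 * gI V x - 2*q * (gI V x)^2) (volume.restrict I01) := by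
    exact (ig.const_mul _).sub (ig2.const_mul _)
  have iA : Integrable (fun x => (8*q^3 - 4*q^2 * DI V) - (8*q^2 * gI V x - 2*q * (gI V x)^2))
      (volume.restrict I01) := by exact (integrable_const _).sub if1
  have iB : Integrable (fun x => 4*q * MxI V x - KxI V x) (volume.restrict I01) := by
    exact (iM.const_mul _).sub iK
  have m1 : (∫ x in I01, 8*q^2 * gI V x) = 8*q^2 * DI V := integral_const_mul _ _
  have m2 : (∫ x in I01, 2*q * (gI V x)^2) = 2*q * EI V := integral_const_mul _ _
  have m3 : (∫ x in I01, 4*q * MxI V x) = 4*q * (∫ x in I01, MxI V x) := integral_const_mul _ _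
  rw [e2, integral_add iA iB, integral_sub (integrable_const _) if1,
      integral_sub (ig.const_mul _) (ig2.const_mul _),
      integral_sub (iM.const_mul _) iK, m1, m2, m3, intMx_eq hm hsymm hbd, intKx_eq,
      integral_const]
  simp only [measure_univ, ENNReal.toReal_one, probReal_univ, smul_eq_mul, one_mul]
  ring

lemma E_ge_D2 {q : ℝ} {V : ℝ → ℝ → ℝ} (hm : Measurable (Function.uncurry V))
    (hbd : ∀ x y, |V x y| ≤ 2 * q) : DI V ^ 2 ≤ EI V := by
  have h2q : (0:ℝ) ≤ 2 * q := le_trans (abs_nonneg _) (hbd 0 0)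
  have ig : Integrable (gI V) (volume.restrict I01) := integ0 (gI_meas hm) (gI_bd hbd)
  have ig2 : Integrable (fun x => (gI V x)^2) (volume.restrict I01) := by
    refine integ0 ((gI_meas hm).pow_const 2) (C := (2*q)*(2*q)) fun x => ?_
    rw [sq, abs_mul]
    exact mul_le_mul (gI_bd hbd x) (gI_bd hbd x) (abs_nonneg _) h2q
  have hnn : (0:ℝ) ≤ ∫ x in I01, (gI V x - DI V)^2 :=
    integral_nonneg fun x => sq_nonneg _
  have e : (fun x => (gI V x - DI V)^2)
      = fun x => ((gI V x)^2 - (2 * DI V) * gI V x) + DI V ^ 2 := by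
    funext x; ring
  have m1 : (∫ x in I01, (2 * DI V) * gI V x) = (2 * DI V) * DI V := integral_const_mul _ _
  rw [e, integral_add (by exact ig2.sub (ig.const_mul _)) (integrable_const _),
      integral_sub ig2 (ig.const_mul _), m1, integral_const] at hnn
  simp only [measure_univ, ENNReal.toReal_one, probReal_univ, smul_eq_mul, one_mul] at hnn
  have : (∫ x in I01, (gI V x)^2) = EI V := rfl
  nlinarith [hnn]

lemma goodman (q : ℝ) (hq : 0 ≤ q) (V : ℝ → ℝ → ℝ)
    (hm : Measurable (Function.uncurry V)) (hsymm : ∀ x y, V x y = V y x)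
    (hbd : ∀ x y, |V x y| ≤ 2 * q) :
    tK3 (fun x y => 2*q - V x y) + tK3 V ≥ 2 * q ^ 3 := by
  rw [expand_lemma q V hm hsymm hbd]
  have hE := E_ge_D2 hm hbd
  nlinarith [sq_nonneg (q - DI V), mul_le_mul_of_nonneg_left hE (by linarith : (0:ℝ) ≤ 6*q)]

lemma trip_meas {A : ℝ → ℝ → ℝ} (hA : Measurable (Function.uncurry A)) :
    Measurable (fun p : (ℝ × ℝ) × ℝ => A p.1.1 p.1.2 * A p.1.1 p.2 * A p.1.2 p.2) :=
  ((hA.comp measurable_fst).mul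
    (hA.comp ((measurable_fst.fst).prodMk measurable_snd))).mul
    (hA.comp ((measurable_fst.snd).prodMk measurable_snd))

lemma innerI_meas {A : ℝ → ℝ → ℝ} (hA : Measurable (Function.uncurry A)) :
    Measurable (fun p : ℝ × ℝ => ∫ z in I01, A p.1 p.2 * A p.1 z * A p.2 z) :=
  ((trip_meas hA).stronglyMeasurable.integral_prod_right'
    (ν := (volume : Measure ℝ).restrict I01)).measurable

lemma tK3_mono (A B : ℝ → ℝ → ℝ) (hA : Measurable (Function.uncurry A))
    (hB : Measurable (Function.uncurry B)) (hA0 : ∀ x y, 0 ≤ A x y)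
    (hAB : ∀ x y, A x y ≤ B x y) (hB1 : ∀ x y, B x y ≤ 1) :
    tK3 A ≤ tK3 B := by
  have hB0 : ∀ x y, 0 ≤ B x y := fun x y => le_trans (hA0 x y) (hAB x y)
  have hA1 : ∀ x y, A x y ≤ 1 := fun x y => le_trans (hAB x y) (hB1 x y)
  have habs : ∀ (F : ℝ → ℝ → ℝ), (∀ x y, 0 ≤ F x y) → (∀ x y, F x y ≤ 1) →
      ∀ x y z, |F x y * F x z * F y z| ≤ 1 := by
    intro F h0 h1 x y z
    rw [abs_of_nonneg (mul_nonneg (mul_nonneg (h0 x y) (h0 x z)) (h0 y z))]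
    calc F x y * F x z * F y z ≤ 1 * 1 * 1 :=
          mul_le_mul (mul_le_mul (h1 x y) (h1 x z) (h0 x z) zero_le_one)
            (h1 y z) (h0 y z) (by norm_num)
      _ = 1 := by ring
  have iA : ∀ x y, Integrable (fun z => A x y * A x z * A y z) (volume.restrict I01) := by
    intro x y
    exact integ0 ((measurable_const.mul hA.of_uncurry_left).mul hA.of_uncurry_left)
      (habs A hA0 hA1 x y)
  have iB : ∀ x y, Integrable (fun z => B x y * B x z * B y z) (volume.restrict I01) := by
    intro x y
    exact integ0 ((measurable_const.mul hB.of_uncurry_left).mul hB.of_uncurry_left)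
      (habs B hB0 hB1 x y)
  have inner_mono : ∀ x y, (∫ z in I01, A x y * A x z * A y z)
      ≤ ∫ z in I01, B x y * B x z * B y z := by
    intro x y
    refine integral_mono (iA x y) (iB x y) fun z => ?_
    exact mul_le_mul (mul_le_mul (hAB x y) (hAB x z) (hA0 x z) (hB0 x y))
      (hAB y z) (hA0 y z) (mul_nonneg (hB0 x y) (hB0 x z))
  have inner_bd : ∀ (F : ℝ → ℝ → ℝ), (∀ x y, 0 ≤ F x y) → (∀ x y, F x y ≤ 1) →
      ∀ x y, |∫ z in I01, F x y * F x z * F y z| ≤ 1 := by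
    intro F h0 h1 x y
    exact intbd (habs F h0 h1 x y)
  have iMA : ∀ x, Integrable (fun y => ∫ z in I01, A x y * A x z * A y z)
      (volume.restrict I01) := by
    intro x
    exact integ0 ((innerI_meas hA).comp measurable_prodMk_left) (inner_bd A hA0 hA1 x)
  have iMB : ∀ x, Integrable (fun y => ∫ z in I01, B x y * B x z * B y z)
      (volume.restrict I01) := by
    intro x
    exact integ0 ((innerI_meas hB).comp measurable_prodMk_left) (inner_bd B hB0 hB1 x)
  have mid_mono : ∀ x, (∫ y in I01, ∫ z in I01, A x y * A x z * A y z)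
      ≤ ∫ y in I01, ∫ z in I01, B x y * B x z * B y z := by
    intro x
    exact integral_mono (iMA x) (iMB x) fun y => inner_mono x y
  have mid_meas : ∀ (F : ℝ → ℝ → ℝ), Measurable (Function.uncurry F) →
      Measurable (fun x => ∫ y in I01, ∫ z in I01, F x y * F x z * F y z) := by
    intro F hF
    exact ((innerI_meas hF).stronglyMeasurable.integral_prod_right'
      (ν := (volume : Measure ℝ).restrict I01)).measurable
  have mid_bd : ∀ (F : ℝ → ℝ → ℝ), (∀ x y, 0 ≤ F x y) → (∀ x y, F x y ≤ 1) →
      ∀ x, |∫ y in I01, ∫ z in I01, F x y * F x z * F y z| ≤ 1 := by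
    intro F h0 h1 x
    exact intbd fun y => inner_bd F h0 h1 x y
  exact integral_mono (integ0 (mid_meas A hA) (mid_bd A hA0 hA1))
    (integ0 (mid_meas B hB) (mid_bd B hB0 hB1)) mid_mono

theorem stmt_19 (q : ℝ) (hq : q ∈ Set.Icc (0 : ℝ) 1)
    (W : ℝ → ℝ → ℝ)
    (hrange : ∀ x y, W x y ∈ Set.Icc (0 : ℝ) 1)
    (hsymm : ∀ x y, W x y = W y x)
    (hmeas : Measurable (Function.uncurry W)) :
    tK3 (fun x y => max (2 * q - W x y) 0) ≥ 2 * q ^ 3 - tK3 W := by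
  obtain ⟨hq0, hq1⟩ := hq
  set V : ℝ → ℝ → ℝ := fun x y => min (W x y) (2*q) with hV
  have hUm : (fun x y => max (2 * q - W x y) 0) = fun x y => 2*q - V x y := by
    funext x y
    show max (2 * q - W x y) 0 = 2*q - min (W x y) (2*q)
    rcases le_total (W x y) (2*q) with h | h
    · rw [min_eq_left h, max_eq_left (by linarith)]
    · rw [min_eq_right h, max_eq_right (by linarith)]; ring
  have hVm : Measurable (Function.uncurry V) := by
    exact hmeas.min measurable_const
  have hV0 : ∀ x y, 0 ≤ V x y := fun x y => le_min (hrange x y).1 (by linarith)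
  have hVb : ∀ x y, |V x y| ≤ 2*q :=
    fun x y => abs_le.2 ⟨by linarith [hV0 x y], min_le_right _ _⟩
  have hVs : ∀ x y, V x y = V y x := by
    intro x y; rw [hV]; simp only; rw [hsymm]
  have hg := goodman q hq0 V hVm hVs hVb
  have hmono : tK3 V ≤ tK3 W :=
    tK3_mono V W hVm hmeas hV0 (fun x y => min_le_left _ _) (fun x y => (hrange x y).2)
  rw [hUm]
  linarith
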